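/- Let X be a random variable on [0,1] whose density is the Bernstein density f(t) = Σ_{i=0}^m p_i β_{m,i}(t) with p_i ≥ 0 and Σ p_i = 1. Let μ = E[X] and σ² = Var(X). Then σ² = ((m+2)/(m+3))·Var(μ_I) + μ(1-μ)/(m+3), where I is a random index with P(I = i) = p_i and μ_i = (i+1)/(m+2) is the mean of Beta(i+1, m-i+1); in particular σ² ≥ μ(1-μ)/(m+3). -/

import Mathlib

open Finset intervalIntegral

/-- Beta density `β_{m,i}(t) = (m+1) C(m,i) t^i (1-t)^(m-i)`. -/
noncomputable def bern (m i : ℕ) (t : ℝ) : ℝ :=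
  (m + 1) * (Nat.choose m i) * t ^ i * (1 - t) ^ (m - i)


lemma Jint (a b : ℕ) : ∫ t in (0:ℝ)..1, t^a * (1-t)^b
    = (a.factorial * b.factorial : ℝ) / ((a+b+1).factorial) := by
  induction b generalizing a with
  | zero =>
    simp only [pow_zero, mul_one, integral_pow, Nat.factorial_zero, Nat.cast_one, mul_one,
      Nat.add_zero, Nat.factorial_succ]
    push_cast
    rw [eq_div_iff (by positivity)]
    field_simp
    simp
  | succ b ih =>
    have h1 : ∀ t ∈ Set.uIcc (0:ℝ) 1, t^a*(1-t)^(b+1) = t^a*(1-t)^b - t^(a+1)*(1-t)^b := by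
      intro t _; ring
    rw [intervalIntegral.integral_congr h1, intervalIntegral.integral_sub
      (Continuous.intervalIntegrable (u := fun t : ℝ => t^a * (1-t)^b) ((continuous_pow a).mul ((continuous_const.sub continuous_id').pow b)) _ _)
      (Continuous.intervalIntegrable (u := fun t : ℝ => t^(a+1) * (1-t)^b) ((continuous_pow (a+1)).mul ((continuous_const.sub continuous_id').pow b)) _ _),
      ih a, ih (a+1)]
    have e1 : (a+(b+1)+1) = (a+b+1)+1 := by ring
    have e2 : (a+1+b+1) = (a+b+1)+1 := by ring
    rw [e1, e2, Nat.factorial_succ ((a:ℕ)+b+1), Nat.factorial_succ a, Nat.factorial_succ b]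
    have hne : ((a+b+1).factorial : ℝ) ≠ 0 := Nat.cast_ne_zero.mpr (Nat.factorial_ne_zero _)
    have hne2 : ((a:ℝ)+b+1)+1 ≠ 0 := by positivity
    push_cast
    field_simp
    ring

lemma bern_cont (m i : ℕ) : Continuous (bern m i) := by
  unfold bern; fun_prop

lemma bern_moment (m i k : ℕ) (h : i ≤ m) :
    ∫ t in (0:ℝ)..1, t^k * bern m i t
    = ((m:ℝ)+1) * (m.choose i) * ((i+k).factorial * (m-i).factorial / ((m+k+1).factorial)) := by
  have h1 : ∀ t ∈ Set.uIcc (0:ℝ) 1, t^k * bern m i t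
      = (((m:ℝ)+1) * (m.choose i)) * (t^(i+k)*(1-t)^(m-i)) := by
    intro t _; unfold bern; ring
  rw [intervalIntegral.integral_congr h1, intervalIntegral.integral_const_mul, Jint,
    show i+k+(m-i)+1 = m+k+1 by omega]

lemma IB0 (m i : ℕ) (h : i ≤ m) : ∫ t in (0:ℝ)..1, bern m i t = 1 := by
  have := bern_moment m i 0 h
  simp only [pow_zero, one_mul] at this
  rw [this]
  have key : ((m.choose i : ℝ)) * (i.factorial) * ((m-i).factorial) = m.factorial := by
    exact_mod_cast congrArg (Nat.cast : ℕ → ℝ) (Nat.choose_mul_factorial_mul_factorial h)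
  rw [Nat.add_zero, Nat.factorial_succ m]
  have hf : (m.factorial : ℝ) ≠ 0 := Nat.cast_ne_zero.mpr (Nat.factorial_ne_zero _)
  push_cast
  field_simp
  linear_combination key

lemma IB1 (m i : ℕ) (h : i ≤ m) :
    ∫ t in (0:ℝ)..1, t * bern m i t = ((i:ℝ)+1)/((m:ℝ)+2) := by
  have h1 : ∀ t ∈ Set.uIcc (0:ℝ) 1, t * bern m i t = t^1 * bern m i t := by intro t _; ring
  rw [intervalIntegral.integral_congr h1, bern_moment m i 1 h]
  have key : ((m.choose i : ℝ)) * (i.factorial) * ((m-i).factorial) = m.factorial := by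
    exact_mod_cast congrArg (Nat.cast : ℕ → ℝ) (Nat.choose_mul_factorial_mul_factorial h)
  rw [show m+1+1 = m+2 by ring, show (m+2) = (m+1)+1 by ring, Nat.factorial_succ (m+1),
    Nat.factorial_succ m, Nat.factorial_succ i]
  have hf : (m.factorial : ℝ) ≠ 0 := Nat.cast_ne_zero.mpr (Nat.factorial_ne_zero _)
  have hm2 : ((m:ℝ)+1)+1 ≠ 0 := by positivity
  push_cast
  field_simp
  linear_combination ((m:ℝ)+2) * key

lemma IB2 (m i : ℕ) (h : i ≤ m) :
    ∫ t in (0:ℝ)..1, t^2 * bern m i t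
    = ((i:ℝ)+1)*((i:ℝ)+2)/(((m:ℝ)+2)*((m:ℝ)+3)) := by
  rw [bern_moment m i 2 h]
  have key : ((m.choose i : ℝ)) * (i.factorial) * ((m-i).factorial) = m.factorial := by
    exact_mod_cast congrArg (Nat.cast : ℕ → ℝ) (Nat.choose_mul_factorial_mul_factorial h)
  rw [show m+2+1 = ((m+1)+1)+1 by ring, Nat.factorial_succ ((m+1)+1), Nat.factorial_succ (m+1),
    Nat.factorial_succ m, show i+2 = (i+1)+1 by ring, Nat.factorial_succ (i+1), Nat.factorial_succ i]
  have hf : (m.factorial : ℝ) ≠ 0 := Nat.cast_ne_zero.mpr (Nat.factorial_ne_zero _)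
  have hm2 : ((m:ℝ)+1)+1 ≠ 0 := by positivity
  have hm3 : (((m:ℝ)+1)+1)+1 ≠ 0 := by positivity
  push_cast
  field_simp
  linear_combination ((m:ℝ)+2)*((m:ℝ)+3) * ((i:ℝ)+2) * key

/-- Variance decomposition for a Bernstein (beta-mixture) density:
`σ² = ((m+2)/(m+3)) Var(μ_I) + μ(1-μ)/(m+3) ≥ μ(1-μ)/(m+3)`. -/
theorem stmt2 (m : ℕ) (p : ℕ → ℝ)
    (hp : ∀ i ∈ Finset.range (m + 1), 0 ≤ p i)
    (hp1 : ∑ i ∈ Finset.range (m + 1), p i = 1)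
    (f : ℝ → ℝ) (hf : ∀ t, f t = ∑ i ∈ Finset.range (m + 1), p i * bern m i t)
    (μ σ2 varI : ℝ)
    (hμ : μ = ∫ t in (0 : ℝ)..1, t * f t)
    (hσ2 : σ2 = ∫ t in (0 : ℝ)..1, (t - μ) ^ 2 * f t)
    (hvarI : varI = ∑ i ∈ Finset.range (m + 1),
      p i * (((i : ℝ) + 1) / ((m : ℝ) + 2) - μ) ^ 2) :
    σ2 = ((m : ℝ) + 2) / ((m : ℝ) + 3) * varI + μ * (1 - μ) / ((m : ℝ) + 3) ∧
      μ * (1 - μ) / ((m : ℝ) + 3) ≤ σ2 := by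
  have hm2 : (m:ℝ) + 2 ≠ 0 := by positivity
  have hm3 : (m:ℝ) + 3 ≠ 0 := by positivity
  -- μ as a sum
  have hμ' : μ = ∑ i ∈ Finset.range (m + 1), p i * (((i:ℝ)+1)/((m:ℝ)+2)) := by
    rw [hμ]
    have h1 : ∀ t ∈ Set.uIcc (0:ℝ) 1, t * f t
        = ∑ i ∈ Finset.range (m + 1), p i * (t * bern m i t) := by
      intro t _
      rw [hf, Finset.mul_sum]
      exact Finset.sum_congr rfl fun i _ => by ring
    rw [intervalIntegral.integral_congr h1,
      intervalIntegral.integral_finset_sum (fun i _ =>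
        (Continuous.intervalIntegrable (u := fun t : ℝ => p i * (t * bern m i t)) (continuous_const.mul (continuous_id'.mul (bern_cont m i))) _ _))]
    refine Finset.sum_congr rfl fun i hi => ?_
    rw [intervalIntegral.integral_const_mul, IB1 m i (by simpa using Nat.lt_succ_iff.mp (Finset.mem_range.mp hi))]
  -- σ2 as a sum
  have hσ2' : σ2 = ∑ i ∈ Finset.range (m + 1),
      p i * (((i:ℝ)+1)*((i:ℝ)+2)/(((m:ℝ)+2)*((m:ℝ)+3)) - 2*μ*(((i:ℝ)+1)/((m:ℝ)+2)) + μ^2) := by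
    rw [hσ2]
    have h1 : ∀ t ∈ Set.uIcc (0:ℝ) 1, (t - μ)^2 * f t
        = ∑ i ∈ Finset.range (m + 1), p i * ((t - μ)^2 * bern m i t) := by
      intro t _
      rw [hf, Finset.mul_sum]
      exact Finset.sum_congr rfl fun i _ => by ring
    rw [intervalIntegral.integral_congr h1,
      intervalIntegral.integral_finset_sum (fun i _ =>
        (Continuous.intervalIntegrable (u := fun t : ℝ => p i * ((t - μ)^2 * bern m i t)) (continuous_const.mul (((continuous_id'.sub continuous_const).pow 2).mul
          (bern_cont m i))) _ _))]
    refine Finset.sum_congr rfl fun i hi => ?_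
    have him : i ≤ m := Nat.lt_succ_iff.mp (Finset.mem_range.mp hi)
    rw [intervalIntegral.integral_const_mul]
    congr 1
    have h2 : ∀ t ∈ Set.uIcc (0:ℝ) 1, (t - μ)^2 * bern m i t
        = t^2 * bern m i t - 2*μ*(t * bern m i t) + μ^2 * bern m i t := by
      intro t _; ring
    rw [intervalIntegral.integral_congr h2, intervalIntegral.integral_add, intervalIntegral.integral_sub,
      intervalIntegral.integral_const_mul, intervalIntegral.integral_const_mul,
      IB0 m i him, IB1 m i him, IB2 m i him, mul_one]
    · exact ((continuous_pow 2).mul (bern_cont m i)).intervalIntegrable _ _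
    · exact (continuous_const.mul (continuous_id'.mul (bern_cont m i))).intervalIntegrable _ _
    · exact (((continuous_pow 2).mul (bern_cont m i)).sub
        (continuous_const.mul (continuous_id'.mul (bern_cont m i)))).intervalIntegrable _ _
    · exact (continuous_const.mul (bern_cont m i)).intervalIntegrable _ _
  -- sum identity
  have E : ∑ i ∈ Finset.range (m + 1),
      p i * (((i:ℝ)+1)*((i:ℝ)+2)/(((m:ℝ)+2)*((m:ℝ)+3)) - 2*μ*(((i:ℝ)+1)/((m:ℝ)+2)) + μ^2)
      = ((m:ℝ)+2)/((m:ℝ)+3) * ∑ i ∈ Finset.range (m + 1),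
          p i * (((i : ℝ) + 1) / ((m : ℝ) + 2) - μ) ^ 2
        + (1-2*μ)/((m:ℝ)+3) * ∑ i ∈ Finset.range (m + 1), p i * (((i:ℝ)+1)/((m:ℝ)+2))
        + μ^2/((m:ℝ)+3) * ∑ i ∈ Finset.range (m + 1), p i := by
    rw [Finset.mul_sum, Finset.mul_sum, Finset.mul_sum, ← Finset.sum_add_distrib,
      ← Finset.sum_add_distrib]
    refine Finset.sum_congr rfl fun i _ => ?_
    field_simp
    ring
  have hpart1 : σ2 = ((m : ℝ) + 2) / ((m : ℝ) + 3) * varI + μ * (1 - μ) / ((m : ℝ) + 3) := by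
    rw [hσ2', E, ← hμ', hp1, hvarI]
    field_simp
    ring
  refine ⟨hpart1, ?_⟩
  have hv : 0 ≤ varI := by
    rw [hvarI]
    exact Finset.sum_nonneg fun i hi => mul_nonneg (hp i hi) (sq_nonneg _)
  have : 0 ≤ ((m : ℝ) + 2) / ((m : ℝ) + 3) * varI :=
    mul_nonneg (by positivity) hv
  linarith [hpart1]
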